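/- Let 𝒫 ⊆ ℝ^d be a finite symmetric set of vectors and a : 𝒫 → ℝ a function such that P(a) = {x ∈ ℝ^d : ⟨p,x⟩ ≤ a(p) for all p ∈ 𝒫} is a compact polytope of dimension d. Let e ∈ ℝ^d be nonzero and b ≥ 0. Suppose that every exposed face F of P(a) of dimension d−2 which belongs to the shadow boundary of P(a) in direction e and is transversal to e is a contact face with contact vector orthogonal to e, i.e., there exists p ∈ 𝒫 with ⟨e,p⟩ = 0 such that F = P(a) ∩ {x : ⟨p,x⟩ = a(p)}. Then P(a) + b·z(e) = P(a + f_e), i.e., the Minkowski sum of P(a) and the segment b·z(e) equals {x ∈ ℝ^d : ⟨p,x⟩ ≤ a(p) + b|⟨p,e⟩| for all p ∈ 𝒫}. -/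

import Mathlib

open scoped RealInnerProductSpace Pointwise

/-- The segment `b·z(e) = {λ • e : -b ≤ λ ≤ b}`. -/
def segZ {d : ℕ} (e : EuclideanSpace ℝ (Fin d)) (b : ℝ) : Set (EuclideanSpace ℝ (Fin d)) :=
  {x | ∃ l : ℝ, -b ≤ l ∧ l ≤ b ∧ x = l • e}

/-- `P(a) = {x : ⟪p, x⟫ ≤ a p for all p ∈ Pset}`. -/
def polyOf {d : ℕ} (Pset : Set (EuclideanSpace ℝ (Fin d))) (a : EuclideanSpace ℝ (Fin d) → ℝ) :
    Set (EuclideanSpace ℝ (Fin d)) :=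
  {x | ∀ p ∈ Pset, ⟪p, x⟫ ≤ a p}

/-- The exposed face of `P` in direction `u`. -/
def expFace {d : ℕ} (P : Set (EuclideanSpace ℝ (Fin d))) (u : EuclideanSpace ℝ (Fin d)) :
    Set (EuclideanSpace ℝ (Fin d)) :=
  {x ∈ P | ∀ y ∈ P, ⟪u, y⟫ ≤ ⟪u, x⟫}

/-- The dimension of a set: the dimension of the direction of its affine span. -/
noncomputable def sdim {d : ℕ} (S : Set (EuclideanSpace ℝ (Fin d))) : ℕ :=
  Module.finrank ℝ (affineSpan ℝ S).direction

section helpers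

variable {d : ℕ}

lemma dense_inner_ne (N x : EuclideanSpace ℝ (Fin d)) (hN : N ≠ 0) :
    Dense {y : EuclideanSpace ℝ (Fin d) | ⟪N, y - x⟫ ≠ 0} := by
  intro z
  rw [Metric.mem_closure_iff]
  intro ε hε
  by_cases hz : ⟪N, z - x⟫ ≠ 0
  · exact ⟨z, hz, by simpa using hε⟩
  · push_neg at hz
    have hNn : (0:ℝ) < ‖N‖ := norm_pos_iff.mpr hN
    refine ⟨z + (ε / (2 * ‖N‖)) • N, ?_, ?_⟩
    · have : ⟪N, z + (ε / (2 * ‖N‖)) • N - x⟫ = ⟪N, z - x⟫ + (ε / (2 * ‖N‖)) * ⟪N, N⟫ := by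
        rw [add_sub_right_comm, inner_add_right, real_inner_smul_right]
      simp only [Set.mem_setOf_eq, this, hz, zero_add]
      have : ⟪N, N⟫ = ‖N‖ ^ 2 := real_inner_self_eq_norm_sq N
      rw [this]
      positivity
    · rw [dist_self_add_right, norm_smul, Real.norm_eq_abs, abs_of_pos (by positivity)]
      have h1 : ε / (2 * ‖N‖) * ‖N‖ = ε / 2 := by field_simp
      rw [h1]; linarith

lemma dense_biInter_finset {ι : Type*} {X : Type*} [TopologicalSpace X]
    (s : Finset ι) (f : ι → Set X) (ho : ∀ i ∈ s, IsOpen (f i)) (hd : ∀ i ∈ s, Dense (f i)) :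
    Dense (⋂ i ∈ s, f i) := by
  classical
  induction s using Finset.induction_on with
  | empty => simp [dense_univ]
  | @insert a s ha ih =>
      rw [Finset.set_biInter_insert]
      exact (hd a (by simp)).inter_of_isOpen_left
        (ih (fun i hi => ho i (by simp [hi])) (fun i hi => hd i (by simp [hi])))
        (ho a (by simp))

lemma convex_polyOf (Pset : Set (EuclideanSpace ℝ (Fin d))) (a : EuclideanSpace ℝ (Fin d) → ℝ) :
    Convex ℝ (polyOf Pset a) := by
  have : polyOf Pset a = ⋂ p ∈ Pset, {x : EuclideanSpace ℝ (Fin d) | ⟪p, x⟫ ≤ a p} := by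
    ext x; simp [polyOf]
  rw [this]
  refine convex_iInter₂ (fun p _ => ?_)
  exact convex_halfSpace_le ⟨fun x y => inner_add_right p x y, fun c x => real_inner_smul_right p x c⟩ (a p)

lemma not_mem_vectorSpan_of_transversal {F : Set (EuclideanSpace ℝ (Fin d))}
    (hF : Convex ℝ F) {e : EuclideanSpace ℝ (Fin d)} (he : e ≠ 0)
    (htrans : ∀ x ∈ F, ∀ t : ℝ, x + t • e ∈ F → t = 0) :
    e ∉ vectorSpan ℝ F := by
  classical
  intro hmem
  rw [vectorSpan_def, Submodule.mem_span_set'] at hmem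
  obtain ⟨n, c, g, hsum⟩ := hmem
  -- each (g i : E) = f_i - h_i with f_i h_i ∈ F
  have hgi : ∀ i : Fin n, ∃ f ∈ F, ∃ h ∈ F, (g i : EuclideanSpace ℝ (Fin d)) = f - h := by
    intro i
    obtain ⟨v, hv⟩ := g i
    obtain ⟨f, hf, h, hh, hfh⟩ := Set.mem_vsub.mp hv
    exact ⟨f, hf, h, hh, by simp [← hfh]⟩
  set s : ℝ := ∑ i, |c i| with hs
  have hs0 : 0 ≤ s := Finset.sum_nonneg (fun i _ => abs_nonneg _)
  rcases eq_or_lt_of_le hs0 with hzero | hpos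
  · -- all c i = 0, so e = 0
    have : ∀ i ∈ Finset.univ, |c i| = 0 := by
      intro i _
      have := Finset.sum_eq_zero_iff_of_nonneg (fun i _ => abs_nonneg (c i)) |>.mp hzero.symm
      exact this i (Finset.mem_univ i)
    apply he
    rw [← hsum]
    apply Finset.sum_eq_zero
    intro i _
    have : c i = 0 := abs_eq_zero.mp (this i (Finset.mem_univ i))
    simp [this]
  · -- convexity argument
    set C : Set (EuclideanSpace ℝ (Fin d)) := F - F with hC
    have hCconv : Convex ℝ C := hF.sub hF
    have hmem2 : (s⁻¹ : ℝ) • e ∈ C := by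
      have : (s⁻¹ : ℝ) • e = ∑ i, (|c i| / s) • ((if 0 ≤ c i then (g i : EuclideanSpace ℝ (Fin d)) else -(g i : EuclideanSpace ℝ (Fin d)))) := by
        rw [← hsum, Finset.smul_sum]
        apply Finset.sum_congr rfl
        intro i _
        by_cases hci : 0 ≤ c i
        · simp only [if_pos hci, smul_smul]
          rw [abs_of_nonneg hci]
          congr 1
          field_simp [mul_comm]
        · simp only [if_neg hci, smul_smul]
          rw [abs_of_neg (lt_of_not_ge hci)]
          rw [smul_neg, ← neg_smul]
          congr 1
          field_simp [mul_comm]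
      rw [this]
      apply hCconv.sum_mem
      · intro i _; positivity
      · rw [← Finset.sum_div]
        field_simp
        exact hs.symm
      · intro i _
        obtain ⟨f, hf, h, hh, hfh⟩ := hgi i
        by_cases hci : 0 ≤ c i
        · rw [if_pos hci, hfh]; exact Set.sub_mem_sub hf hh
        · rw [if_neg hci, hfh, neg_sub]; exact Set.sub_mem_sub hh hf
    obtain ⟨f, hf, h, hh, hfh⟩ := Set.mem_sub.mp hmem2
    have : h + (s⁻¹ : ℝ) • e ∈ F := by
      have : h + (s⁻¹ : ℝ) • e = f := by rw [← hfh]; abel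
      rwa [this]
    have := htrans h hh _ this
    have hsne : s⁻¹ ≠ 0 := inv_ne_zero (ne_of_gt hpos)
    exact hsne this

end helpers

set_option maxHeartbeats 1000000 in
lemma lemmaA {d : ℕ} (C : Finset (EuclideanSpace ℝ (Fin d) × ℝ))
    (hCnz : ∀ i ∈ C, i.1 ≠ 0)
    (y0 x : EuclideanSpace ℝ (Fin d))
    (hy0 : ∀ i ∈ C, ⟪i.1, y0⟫ < i.2)
    (hxv : ∃ i ∈ C, i.2 < ⟪i.1, x⟫) :
    ∃ i ∈ C, i.2 < ⟪i.1, x⟫ ∧ ∃ z0, (∀ j ∈ C, ⟪j.1, z0⟫ ≤ j.2) ∧ ⟪i.1, z0⟫ = i.2 ∧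
      ∃ δ : ℝ, 0 < δ ∧ ∀ v : EuclideanSpace ℝ (Fin d), ⟪i.1, v⟫ = 0 → ‖v‖ < δ →
        ∀ j ∈ C, ⟪j.1, z0 + v⟫ ≤ j.2 := by
  classical
  have hCne : C.Nonempty := by obtain ⟨i, hi, -⟩ := hxv; exact ⟨i, hi⟩
  -- the open set of strictly feasible points
  set S : Set (EuclideanSpace ℝ (Fin d)) := ⋂ i ∈ C, {y | ⟪i.1, y⟫ < i.2} with hS
  have hSopen : IsOpen S := by
    refine isOpen_biInter_finset (fun i _ => ?_)
    exact isOpen_lt (continuous_const.inner continuous_id) continuous_const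
  have hy0S : y0 ∈ S := by
    rw [hS]; exact Set.mem_iInter₂.mpr (fun i hi => hy0 i hi)
  obtain ⟨r, hrpos, hball⟩ := Metric.isOpen_iff.mp hSopen y0 hy0S
  -- bad pairs and their avoidance normals
  set βf : EuclideanSpace ℝ (Fin d) × ℝ → ℝ := fun i => i.2 - ⟪i.1, x⟫ with hβf
  set ν : (EuclideanSpace ℝ (Fin d) × ℝ) → (EuclideanSpace ℝ (Fin d) × ℝ) →
      EuclideanSpace ℝ (Fin d) := fun i j => βf i • j.1 - βf j • i.1 with hν
  set N : (EuclideanSpace ℝ (Fin d) × ℝ) → (EuclideanSpace ℝ (Fin d) × ℝ) →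
      EuclideanSpace ℝ (Fin d) := fun i j => if ν i j = 0 then i.1 else ν i j with hN
  set BP : Finset ((EuclideanSpace ℝ (Fin d) × ℝ) × (EuclideanSpace ℝ (Fin d) × ℝ)) :=
    (C ×ˢ C).filter (fun ij =>
      {z : EuclideanSpace ℝ (Fin d) | ⟪ij.1.1, z⟫ = ij.1.2} ≠
      {z : EuclideanSpace ℝ (Fin d) | ⟪ij.2.1, z⟫ = ij.2.2}) with hBP
  have hNnz : ∀ ij ∈ BP, N ij.1 ij.2 ≠ 0 := by
    intro ij hij
    have hij' := Finset.mem_filter.mp hij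
    have h1 := (Finset.mem_product.mp hij'.1).1
    by_cases hz : ν ij.1 ij.2 = 0
    · simp only [hN, if_pos hz]; exact hCnz _ h1
    · simp only [hN, if_neg hz]; exact hz
  -- choose a good starting point y
  have hD : Dense (⋂ ij ∈ BP, {y : EuclideanSpace ℝ (Fin d) | ⟪N ij.1 ij.2, y - x⟫ ≠ 0}) := by
    refine dense_biInter_finset _ _ (fun ij _ => ?_) (fun ij hij => dense_inner_ne _ _ (hNnz ij hij))
    have hc : Continuous (fun y : EuclideanSpace ℝ (Fin d) => ⟪N ij.1 ij.2, y - x⟫) :=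
      continuous_const.inner (continuous_id.sub continuous_const)
    exact IsOpen.preimage hc (isOpen_ne : IsOpen {r : ℝ | r ≠ 0})
  obtain ⟨y, hyD, hyball⟩ := hD.exists_mem_open Metric.isOpen_ball ⟨y0, Metric.mem_ball_self hrpos⟩
  have hyS : ∀ i ∈ C, ⟪i.1, y⟫ < i.2 := by
    have := hball hyball
    rw [hS] at this
    exact fun i hi => Set.mem_iInter₂.mp this i hi
  have hyD' : ∀ ij ∈ BP, ⟪N ij.1 ij.2, y - x⟫ ≠ 0 := fun ij hij =>
    Set.mem_iInter₂.mp hyD ij hij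
  -- the path from y to x
  set f : ℝ → EuclideanSpace ℝ (Fin d) := fun t => y + t • (x - y) with hf
  have hexp : ∀ (u : EuclideanSpace ℝ (Fin d)) (t : ℝ), ⟪u, f t⟫ = ⟪u, y⟫ + t * ⟪u, x - y⟫ := by
    intro u t; rw [hf]; simp only [inner_add_right, real_inner_smul_right]
  set K : Set ℝ := (Set.Icc (0:ℝ) 1) ∩ ⋂ j ∈ C, {t : ℝ | ⟪j.1, f t⟫ ≤ j.2} with hK
  have hKmem : ∀ t : ℝ, t ∈ K ↔ (0 ≤ t ∧ t ≤ 1 ∧ ∀ j ∈ C, ⟪j.1, f t⟫ ≤ j.2) := by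
    intro t
    constructor
    · rintro ⟨h1, h2⟩
      exact ⟨h1.1, h1.2, fun j hj => Set.mem_iInter₂.mp h2 j hj⟩
    · rintro ⟨h1, h2, h3⟩
      exact ⟨⟨h1, h2⟩, Set.mem_iInter₂.mpr h3⟩
  have hK0 : (0:ℝ) ∈ K := by
    rw [hKmem]
    refine ⟨le_refl 0, zero_le_one, fun j hj => ?_⟩
    rw [hexp]
    simpa using (hyS j hj).le
  have hKclosed : IsClosed K := by
    refine IsClosed.inter isClosed_Icc (isClosed_biInter (fun j hj => ?_))
    exact isClosed_le ((continuous_const.inner (continuous_const.add (continuous_id.smul continuous_const)))) continuous_const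
  have hKbdd : BddAbove K := ⟨1, fun t ht => ((hKmem t).mp ht).2.1⟩
  set ts : ℝ := sSup K with hts
  have htsK : ts ∈ K := hKclosed.csSup_mem ⟨0, hK0⟩ hKbdd
  obtain ⟨hts0, hts1, htsR⟩ := (hKmem ts).mp htsK
  have hxnotR : ¬ (∀ j ∈ C, ⟪j.1, x⟫ ≤ j.2) := by
    obtain ⟨i, hi, hvi⟩ := hxv
    intro h; exact absurd (h i hi) (not_le.mpr hvi)
  have hfx : f 1 = x := by rw [hf]; simp
  have hts_lt1 : ts < 1 := by
    rcases lt_or_eq_of_le hts1 with h | h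
    · exact h
    · exfalso
      apply hxnotR
      intro j hj
      have h2 := htsR j hj
      rw [h, hfx] at h2
      exact h2
  -- ts > 0
  set A : ℝ := C.sup' hCne (fun i => |⟪i.1, x - y⟫|) with hA
  have hAbd : ∀ i ∈ C, |⟪i.1, x - y⟫| ≤ A := fun i hi => by rw [hA]; exact Finset.le_sup' (fun i => |⟪i.1, x - y⟫|) hi
  have hA0 : 0 ≤ A := by
    obtain ⟨i, hi⟩ := hCne
    exact le_trans (abs_nonneg _) (hAbd i hi)
  have h1A : (0:ℝ) < 1 + A := by linarith
  have hts_pos : 0 < ts := by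
    set g0 : ℝ := C.inf' hCne (fun i => i.2 - ⟪i.1, y⟫) with hg0
    have hg0pos : 0 < g0 := by
      rw [hg0, Finset.lt_inf'_iff]
      intro i hi
      linarith [hyS i hi]
    set τ : ℝ := min 1 (g0 / (1 + A)) with hτ
    have hτpos : 0 < τ := by
      rw [hτ]; exact lt_min one_pos (by positivity)
    have hτK : τ ∈ K := by
      rw [hKmem]
      refine ⟨hτpos.le, by rw [hτ]; exact min_le_left _ _, fun j hj => ?_⟩
      rw [hexp]
      have h1 : τ * ⟪j.1, x - y⟫ ≤ τ * (1 + A) := by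
        apply mul_le_mul_of_nonneg_left _ hτpos.le
        have h5 := hAbd j hj
        have h6 := le_abs_self (⟪j.1, x - y⟫)
        linarith
      have hτle : τ ≤ g0 / (1 + A) := by rw [hτ]; exact min_le_right _ _
      have h2 : τ * (1 + A) ≤ g0 := by
        calc τ * (1 + A) ≤ (g0 / (1 + A)) * (1 + A) := mul_le_mul_of_nonneg_right hτle h1A.le
          _ = g0 := by field_simp
      have h4 : g0 ≤ j.2 - ⟪j.1, y⟫ := by rw [hg0]; exact Finset.inf'_le _ hj
      linarith
    exact lt_of_lt_of_le hτpos (le_csSup hKbdd hτK)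
  set z0 : EuclideanSpace ℝ (Fin d) := f ts with hz0
  -- the tight set at z0 is nonempty
  have htight : ∃ i ∈ C, ⟪i.1, z0⟫ = i.2 := by
    by_contra hno
    push_neg at hno
    have hstrict : ∀ i ∈ C, ⟪i.1, z0⟫ < i.2 := fun i hi => lt_of_le_of_ne (htsR i hi) (hno i hi)
    set g1 : ℝ := C.inf' hCne (fun i => i.2 - ⟪i.1, z0⟫) with hg1
    have hg1pos : 0 < g1 := by
      rw [hg1, Finset.lt_inf'_iff]
      intro i hi
      linarith [hstrict i hi]
    set τ : ℝ := min 1 (ts + g1 / (1 + A)) with hτ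
    have hτgt : ts < τ := by
      rw [hτ]
      refine lt_min hts_lt1 ?_
      have : 0 < g1 / (1 + A) := by positivity
      linarith
    have hτK : τ ∈ K := by
      rw [hKmem]
      refine ⟨le_trans hts0 hτgt.le, by rw [hτ]; exact min_le_left _ _, fun j hj => ?_⟩
      have hdiff : ⟪j.1, f τ⟫ = ⟪j.1, z0⟫ + (τ - ts) * ⟪j.1, x - y⟫ := by
        rw [hexp, hz0, hexp]; ring
      rw [hdiff]
      have hτts : τ - ts ≤ g1 / (1 + A) := by
        have := min_le_right 1 (ts + g1 / (1 + A))
        rw [← hτ] at this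
        linarith
      have h1 : (τ - ts) * ⟪j.1, x - y⟫ ≤ (τ - ts) * (1 + A) := by
        apply mul_le_mul_of_nonneg_left _ (by linarith : (0:ℝ) ≤ τ - ts)
        have h5 := hAbd j hj
        have h6 := le_abs_self (⟪j.1, x - y⟫)
        linarith
      have h2 : (τ - ts) * (1 + A) ≤ g1 := by
        calc (τ - ts) * (1 + A) ≤ (g1 / (1 + A)) * (1 + A) := mul_le_mul_of_nonneg_right hτts h1A.le
          _ = g1 := by field_simp
      have h4 : g1 ≤ j.2 - ⟪j.1, z0⟫ := by rw [hg1]; exact Finset.inf'_le _ hj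
      linarith
    have := le_csSup hKbdd hτK
    linarith
  obtain ⟨i0, hi0C, hi0t⟩ := htight
  -- violation at x for i0
  have hi0v : i0.2 < ⟪i0.1, x⟫ := by
    have hAy : ⟪i0.1, y⟫ < i0.2 := hyS i0 hi0C
    have hz0v : ⟪i0.1, y⟫ + ts * ⟪i0.1, x - y⟫ = i0.2 := by rw [← hexp, ← hz0, hi0t]
    have hBpos : 0 < ⟪i0.1, x - y⟫ := by nlinarith
    have hxy : ⟪i0.1, x⟫ = ⟪i0.1, y⟫ + ⟪i0.1, x - y⟫ := by
      rw [inner_sub_right]; ring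
    nlinarith
  -- key: all tight constraints share the hyperplane of i0
  have hskey : ∀ j, ⟪j.1, z0⟫ = j.2 → (1 - ts) * ⟪j.1, y - x⟫ = βf j := by
    intro j hj
    have e1 : ⟪j.1, z0⟫ = ⟪j.1, y⟫ + ts * ⟪j.1, x - y⟫ := by rw [hz0]; exact hexp j.1 ts
    have e2 : ⟪j.1, x - y⟫ = ⟪j.1, x⟫ - ⟪j.1, y⟫ := inner_sub_right _ _ _
    have e3 : ⟪j.1, y - x⟫ = ⟪j.1, y⟫ - ⟪j.1, x⟫ := inner_sub_right _ _ _
    rw [hβf, e3]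
    linear_combination hj - e1 - ts * e2
  have hkey : ∀ j ∈ C, ⟪j.1, z0⟫ = j.2 →
      {z : EuclideanSpace ℝ (Fin d) | ⟪j.1, z⟫ = j.2} =
      {z : EuclideanSpace ℝ (Fin d) | ⟪i0.1, z⟫ = i0.2} := by
    intro j hjC hjt
    by_contra hne
    have hBPmem : (i0, j) ∈ BP := by
      rw [hBP, Finset.mem_filter]
      exact ⟨Finset.mem_product.mpr ⟨hi0C, hjC⟩, fun h => hne h.symm⟩
    have hyD0 := hyD' _ hBPmem
    have hs_ne : (1 - ts) ≠ 0 := by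
      intro h; rw [sub_eq_zero] at h; exact absurd h.symm (ne_of_lt hts_lt1)
    have hβi := hskey i0 hi0t
    have hβj := hskey j hjt
    by_cases hνz : ν i0 j = 0
    · -- ν = 0 case
      have hNval : N i0 j = i0.1 := by simp only [hN, if_pos hνz]
      rw [hNval] at hyD0
      have hν0 : βf i0 • j.1 = βf j • i0.1 := by
        have h2 : βf i0 • j.1 - βf j • i0.1 = 0 := by
          have := hνz; simp only [hν] at this; exact this
        exact sub_eq_zero.mp h2
      by_cases hβi0 : βf i0 = 0
      · have hβj0 : βf j = 0 := by
          have h3 : βf j • i0.1 = 0 := by rw [← hν0, hβi0, zero_smul]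
          rcases smul_eq_zero.mp h3 with h | h
          · exact h
          · exact absurd h (hCnz i0 hi0C)
        apply hyD0
        have h4 := hβi
        rw [hβi0] at h4
        rcases mul_eq_zero.mp h4 with h | h
        · exact absurd h hs_ne
        · exact h
      · set lam : ℝ := βf j / βf i0 with hlam
        have hj1 : j.1 = lam • i0.1 := by
          calc j.1 = (βf i0)⁻¹ • (βf i0 • j.1) := by
                rw [smul_smul, inv_mul_cancel₀ hβi0, one_smul]
            _ = (βf i0)⁻¹ • (βf j • i0.1) := by rw [hν0]
            _ = lam • i0.1 := by rw [smul_smul, hlam, div_eq_inv_mul]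
        have hlamne : lam ≠ 0 := by
          intro h
          have h5 : j.1 = 0 := by rw [hj1, h, zero_smul]
          exact hCnz j hjC h5
        have hβjlam : βf j = lam * βf i0 := by
          rw [hlam]; field_simp
        have hj2 : j.2 = lam * i0.2 := by
          have h1 : βf j = j.2 - ⟪j.1, x⟫ := by rw [hβf]
          have h2 : βf i0 = i0.2 - ⟪i0.1, x⟫ := by rw [hβf]
          have h3 : ⟪j.1, x⟫ = lam * ⟪i0.1, x⟫ := by rw [hj1, real_inner_smul_left]
          have h6 := hβjlam
          rw [h1, h2, h3] at h6
          linear_combination h6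
        apply hne
        ext z
        simp only [Set.mem_setOf_eq]
        rw [hj1, hj2, real_inner_smul_left]
        constructor
        · intro h; exact mul_left_cancel₀ hlamne h
        · intro h; rw [h]
    · have hNval : N i0 j = ν i0 j := by simp only [hN, if_neg hνz]
      rw [hNval] at hyD0
      apply hyD0
      have hexp2 : ⟪ν i0 j, y - x⟫ = βf i0 * ⟪j.1, y - x⟫ - βf j * ⟪i0.1, y - x⟫ := by
        simp only [hν, inner_sub_left, real_inner_smul_left]
      have hcalc : (1 - ts) * ⟪ν i0 j, y - x⟫ = 0 := by
        rw [hexp2]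
        linear_combination (βf i0) * hβj - (βf j) * hβi
      rcases mul_eq_zero.mp hcalc with h | h
      · exact absurd h hs_ne
      · exact h
  -- construct δ
  set slackC : Finset (EuclideanSpace ℝ (Fin d) × ℝ) :=
    C.filter (fun j => ¬ (⟪j.1, z0⟫ = j.2)) with hslackC
  set δ : ℝ := if h : slackC.Nonempty
    then slackC.inf' h (fun j => (j.2 - ⟪j.1, z0⟫) / (1 + ‖j.1‖)) else 1 with hδ
  have hδpos : 0 < δ := by
    rw [hδ]
    split_ifs with h
    · rw [Finset.lt_inf'_iff]
      intro j hj
      have hj' := Finset.mem_filter.mp hj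
      have h8 : ⟪j.1, z0⟫ < j.2 := lt_of_le_of_ne (htsR j hj'.1) hj'.2
      have h9 : (0:ℝ) < 1 + ‖j.1‖ := by positivity
      exact div_pos (by linarith) h9
    · exact one_pos
  refine ⟨i0, hi0C, hi0v, z0, htsR, hi0t, δ, hδpos, ?_⟩
  intro v hv hvn j hjC
  by_cases hjt : ⟪j.1, z0⟫ = j.2
  · -- tight: use shared hyperplane
    have hHyp := hkey j hjC hjt
    have hz0v : z0 + v ∈ {z : EuclideanSpace ℝ (Fin d) | ⟪i0.1, z⟫ = i0.2} := by
      simp only [Set.mem_setOf_eq, inner_add_right, hv, hi0t, add_zero]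
    rw [← hHyp] at hz0v
    exact le_of_eq hz0v
  · -- slack: use δ margin
    have hjslack : j ∈ slackC := Finset.mem_filter.mpr ⟨hjC, hjt⟩
    have hne' : slackC.Nonempty := ⟨j, hjslack⟩
    have hδle : δ ≤ (j.2 - ⟪j.1, z0⟫) / (1 + ‖j.1‖) := by
      rw [hδ, dif_pos hne']
      exact Finset.inf'_le _ hjslack
    have h9 : (0:ℝ) < 1 + ‖j.1‖ := by positivity
    have h10 : ⟪j.1, v⟫ ≤ ‖j.1‖ * ‖v‖ := real_inner_le_norm _ _
    have h11 : ‖j.1‖ * ‖v‖ ≤ (1 + ‖j.1‖) * ‖v‖ := by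
      apply mul_le_mul_of_nonneg_right _ (norm_nonneg v)
      linarith
    have h12 : (1 + ‖j.1‖) * ‖v‖ < (1 + ‖j.1‖) * δ := by
      exact mul_lt_mul_of_pos_left hvn h9
    have h13 : (1 + ‖j.1‖) * δ ≤ j.2 - ⟪j.1, z0⟫ := by
      calc (1 + ‖j.1‖) * δ ≤ (1 + ‖j.1‖) * ((j.2 - ⟪j.1, z0⟫) / (1 + ‖j.1‖)) :=
            mul_le_mul_of_nonneg_left hδle h9.le
        _ = j.2 - ⟪j.1, z0⟫ := by field_simp
    have h14 : ⟪j.1, z0 + v⟫ = ⟪j.1, z0⟫ + ⟪j.1, v⟫ := inner_add_right _ _ _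
    linarith

lemma mem_polyOf_of_t {d : ℕ} (Pset : Set (EuclideanSpace ℝ (Fin d)))
    (a : EuclideanSpace ℝ (Fin d) → ℝ) (e y : EuclideanSpace ℝ (Fin d)) (t : ℝ)
    (hS0 : ∀ p ∈ Pset, ⟪p, e⟫ = 0 → ⟪p, y⟫ ≤ a p)
    (hup : ∀ p ∈ Pset, 0 < ⟪p, e⟫ → (⟪p, y⟫ - a p) / ⟪p, e⟫ ≤ t)
    (hdn : ∀ q ∈ Pset, ⟪q, e⟫ < 0 → t ≤ (⟪q, y⟫ - a q) / ⟪q, e⟫) :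
    y - t • e ∈ polyOf Pset a := by
  intro p hp
  have hexp : ⟪p, y - t • e⟫ = ⟪p, y⟫ - t * ⟪p, e⟫ := by
    rw [inner_sub_right, real_inner_smul_right]
  rw [hexp]
  rcases lt_trichotomy (⟪p, e⟫) 0 with h | h | h
  · have := hdn p hp h
    rw [le_div_iff_of_neg h] at this
    linarith
  · have := hS0 p hp h
    rw [h]; linarith
  · have := hup p hp h
    rw [div_le_iff₀ h] at this
    linarith

lemma exists_t {d : ℕ} (Pset : Set (EuclideanSpace ℝ (Fin d))) (hfin : Pset.Finite)
    (a : EuclideanSpace ℝ (Fin d) → ℝ) (e y : EuclideanSpace ℝ (Fin d))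
    (hpair : ∀ p ∈ Pset, ∀ q ∈ Pset, 0 < ⟪p, e⟫ → ⟪q, e⟫ < 0 →
      (⟪p, y⟫ - a p) / ⟪p, e⟫ ≤ (⟪q, y⟫ - a q) / ⟪q, e⟫) :
    ∃ t : ℝ, (∀ p ∈ Pset, 0 < ⟪p, e⟫ → (⟪p, y⟫ - a p) / ⟪p, e⟫ ≤ t) ∧
             (∀ q ∈ Pset, ⟪q, e⟫ < 0 → t ≤ (⟪q, y⟫ - a q) / ⟪q, e⟫) := by
  classical
  set r : EuclideanSpace ℝ (Fin d) → ℝ := fun p => (⟪p, y⟫ - a p) / ⟪p, e⟫ with hr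
  set SP : Finset (EuclideanSpace ℝ (Fin d)) := hfin.toFinset.filter (fun p => 0 < ⟪p, e⟫) with hSP
  set SM : Finset (EuclideanSpace ℝ (Fin d)) := hfin.toFinset.filter (fun q => ⟪q, e⟫ < 0) with hSM
  by_cases hSPne : SP.Nonempty
  · refine ⟨SP.sup' hSPne r, fun p hp hpe => ?_, fun q hq hqe => ?_⟩
    · exact Finset.le_sup' r (by rw [hSP, Finset.mem_filter, Set.Finite.mem_toFinset]; exact ⟨hp, hpe⟩)
    · apply Finset.sup'_le
      intro p hp'
      rw [hSP, Finset.mem_filter, Set.Finite.mem_toFinset] at hp'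
      exact hpair p hp'.1 q hq hp'.2 hqe
  · by_cases hSMne : SM.Nonempty
    · refine ⟨SM.inf' hSMne r, fun p hp hpe => ?_, fun q hq hqe => ?_⟩
      · exact absurd ⟨p, by rw [hSP, Finset.mem_filter, Set.Finite.mem_toFinset]; exact ⟨hp, hpe⟩⟩ hSPne
      · exact Finset.inf'_le r (by rw [hSM, Finset.mem_filter, Set.Finite.mem_toFinset]; exact ⟨hq, hqe⟩)
    · refine ⟨0, fun p hp hpe => ?_, fun q hq hqe => ?_⟩
      · exact absurd ⟨p, by rw [hSP, Finset.mem_filter, Set.Finite.mem_toFinset]; exact ⟨hp, hpe⟩⟩ hSPne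
      · exact absurd ⟨q, by rw [hSM, Finset.mem_filter, Set.Finite.mem_toFinset]; exact ⟨hq, hqe⟩⟩ hSMne

set_option maxHeartbeats 1600000 in
/-- if every `(d-2)`-dimensional exposed face of `P(a)` lying on the shadow
boundary in direction `e` and transversal to `e` is a contact face with contact vector
orthogonal to `e`, then `P(a) + b·z(e) = P(a + f_e)`. -/
theorem minkowski_voronoi_stmt6 {d : ℕ}
    (Pset : Set (EuclideanSpace ℝ (Fin d))) (hfin : Pset.Finite)
    (hsym : ∀ p ∈ Pset, -p ∈ Pset)
    (a : EuclideanSpace ℝ (Fin d) → ℝ)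
    (hcomp : IsCompact (polyOf Pset a)) (hdim : sdim (polyOf Pset a) = d)
    (e : EuclideanSpace ℝ (Fin d)) (he : e ≠ 0) (b : ℝ) (hb : 0 ≤ b)
    (hface : ∀ F : Set (EuclideanSpace ℝ (Fin d)),
      -- F is an exposed face of P(a)
      (∃ u : EuclideanSpace ℝ (Fin d), u ≠ 0 ∧ F = expFace (polyOf Pset a) u) →
      -- of dimension d - 2
      sdim F = d - 2 →
      -- belonging to the shadow boundary of P(a) in direction e
      (∀ x ∈ F, ∀ t : ℝ, x + t • e ∈ polyOf Pset a → x + t • e ∈ F) →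
      -- and transversal to e
      (∀ x ∈ F, ∀ t : ℝ, x + t • e ∈ F → t = 0) →
      -- is a contact face F(p) with ⟪e, p⟫ = 0
      ∃ p ∈ Pset, ⟪e, p⟫ = 0 ∧ F = polyOf Pset a ∩ {x | ⟪p, x⟫ = a p}) :
    polyOf Pset a + segZ e b = polyOf Pset (fun p => a p + b * |⟪p, e⟫|) := by
  classical
  -- dimension positivity
  have hd0 : 0 < d := by
    rcases Nat.eq_zero_or_pos d with h | h
    · exfalso; apply he; subst h; ext i; exact Fin.elim0 i
    · exact h
  -- P is nonempty
  have hPne : (polyOf Pset a).Nonempty := by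
    rcases Set.eq_empty_or_nonempty (polyOf Pset a) with h | h
    · exfalso
      have h2 := hdim
      unfold sdim at h2
      rw [h, AffineSubspace.span_empty, AffineSubspace.direction_bot, finrank_bot] at h2
      omega
    · exact h
  -- affine span is everything
  have hconv : Convex ℝ (polyOf Pset a) := convex_polyOf _ _
  have hspan : affineSpan ℝ (polyOf Pset a) = ⊤ := by
    have hdir : (affineSpan ℝ (polyOf Pset a)).direction = ⊤ := by
      apply Submodule.eq_top_of_finrank_eq
      have h := hdim
      unfold sdim at h
      rw [h, finrank_euclideanSpace, Fintype.card_fin]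
    rwa [AffineSubspace.direction_eq_top_iff_of_nonempty
      ((affineSpan_nonempty ℝ).mpr hPne)] at hdir
  -- interior point
  obtain ⟨y0, hy0⟩ : (interior (polyOf Pset a)).Nonempty := by
    rw [hconv.interior_nonempty_iff_affineSpan_eq_top]; exact hspan
  have hy0P : y0 ∈ polyOf Pset a := interior_subset hy0
  have hy0strict : ∀ p ∈ Pset, p ≠ 0 → ⟪p, y0⟫ < a p := by
    intro p hp hpne
    obtain ⟨ε, hε, hball⟩ := Metric.isOpen_iff.mp isOpen_interior y0 hy0
    have hn : 0 < ‖p‖ := norm_pos_iff.mpr hpne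
    have hmem : y0 + (ε / (2 * ‖p‖)) • p ∈ polyOf Pset a := by
      apply interior_subset
      apply hball
      rw [Metric.mem_ball, dist_self_add_left, norm_smul, Real.norm_eq_abs,
        abs_of_pos (by positivity)]
      have h1 : ε / (2 * ‖p‖) * ‖p‖ = ε / 2 := by field_simp
      rw [h1]; linarith
    have h2 := hmem p hp
    rw [inner_add_right, real_inner_smul_right, real_inner_self_eq_norm_sq] at h2
    nlinarith [mul_pos (div_pos hε (by positivity : (0:ℝ) < 2 * ‖p‖)) (pow_pos hn 2)]
  have ha0 : (0 : EuclideanSpace ℝ (Fin d)) ∈ Pset → 0 ≤ a 0 := by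
    intro h0
    have := hy0P 0 h0
    rwa [inner_zero_left] at this
  -- the constraint system
  set PF : Finset (EuclideanSpace ℝ (Fin d)) := hfin.toFinset with hPF
  set wf : EuclideanSpace ℝ (Fin d) → EuclideanSpace ℝ (Fin d) → EuclideanSpace ℝ (Fin d) :=
    fun p q => ⟪p, e⟫ • q - ⟪q, e⟫ • p with hwf
  set ccf : EuclideanSpace ℝ (Fin d) → EuclideanSpace ℝ (Fin d) → ℝ :=
    fun p q => ⟪p, e⟫ * a q - ⟪q, e⟫ * a p with hccf
  set C0 : Finset (EuclideanSpace ℝ (Fin d) × ℝ) :=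
    (PF.filter (fun p => ⟪p, e⟫ = 0 ∧ p ≠ 0)).image (fun p => (p, a p)) with hC0
  set CP : Finset (EuclideanSpace ℝ (Fin d) × ℝ) :=
    (((PF.filter (fun p => 0 < ⟪p, e⟫)) ×ˢ (PF.filter (fun q => ⟪q, e⟫ < 0))).image
      (fun pq => (wf pq.1 pq.2, ccf pq.1 pq.2))).filter (fun i => i.1 ≠ 0) with hCP
  set C : Finset (EuclideanSpace ℝ (Fin d) × ℝ) := C0 ∪ CP with hC
  -- basic inner product facts
  have hwexp : ∀ p q z : EuclideanSpace ℝ (Fin d),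
      ⟪wf p q, z⟫ = ⟪p, e⟫ * ⟪q, z⟫ - ⟪q, e⟫ * ⟪p, z⟫ := by
    intro p q z
    simp only [hwf, inner_sub_left, real_inner_smul_left]
  have hworth : ∀ p q : EuclideanSpace ℝ (Fin d), ⟪wf p q, e⟫ = 0 := by
    intro p q; rw [hwexp]; ring
  -- membership facts about C
  have hCnz : ∀ i ∈ C, i.1 ≠ 0 := by
    intro i hi
    rcases Finset.mem_union.mp hi with h | h
    · obtain ⟨p, hp, rfl⟩ := Finset.mem_image.mp h
      exact (Finset.mem_filter.mp hp).2.2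
    · exact (Finset.mem_filter.mp h).2
  have hCorth : ∀ i ∈ C, ⟪i.1, e⟫ = 0 := by
    intro i hi
    rcases Finset.mem_union.mp hi with h | h
    · obtain ⟨p, hp, rfl⟩ := Finset.mem_image.mp h
      exact (Finset.mem_filter.mp hp).2.1
    · obtain ⟨pq, hpq, rfl⟩ := Finset.mem_image.mp (Finset.mem_filter.mp h).1
      exact hworth _ _
  have hCvalid : ∀ i ∈ C, ∀ z ∈ polyOf Pset a, ⟪i.1, z⟫ ≤ i.2 := by
    intro i hi z hz
    rcases Finset.mem_union.mp hi with h | h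
    · obtain ⟨p, hp, rfl⟩ := Finset.mem_image.mp h
      have hpP : p ∈ Pset := by
        have := (Finset.mem_filter.mp hp).1
        rwa [hPF, Set.Finite.mem_toFinset] at this
      exact hz p hpP
    · obtain ⟨pq, hpq, rfl⟩ := Finset.mem_image.mp (Finset.mem_filter.mp h).1
      obtain ⟨hp1, hp2⟩ := Finset.mem_product.mp hpq
      have hpP : pq.1 ∈ Pset := by
        have := (Finset.mem_filter.mp hp1).1
        rwa [hPF, Set.Finite.mem_toFinset] at this
      have hqP : pq.2 ∈ Pset := by
        have := (Finset.mem_filter.mp hp2).1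
        rwa [hPF, Set.Finite.mem_toFinset] at this
      have hα : 0 < ⟪pq.1, e⟫ := (Finset.mem_filter.mp hp1).2
      have hγ : ⟪pq.2, e⟫ < 0 := (Finset.mem_filter.mp hp2).2
      have h1 := hz pq.1 hpP
      have h2 := hz pq.2 hqP
      show ⟪wf pq.1 pq.2, z⟫ ≤ ⟪pq.1, e⟫ * a pq.2 - ⟪pq.2, e⟫ * a pq.1
      rw [hwexp]
      nlinarith [mul_nonneg hα.le (sub_nonneg.mpr h2), mul_nonneg (neg_nonneg.mpr hγ.le) (sub_nonneg.mpr h1)]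
  have hCy0 : ∀ i ∈ C, ⟪i.1, y0⟫ < i.2 := by
    intro i hi
    rcases Finset.mem_union.mp hi with h | h
    · obtain ⟨p, hp, rfl⟩ := Finset.mem_image.mp h
      have hmf := Finset.mem_filter.mp hp
      have hpP : p ∈ Pset := by
        have := hmf.1; rwa [hPF, Set.Finite.mem_toFinset] at this
      exact hy0strict p hpP hmf.2.2
    · obtain ⟨pq, hpq, rfl⟩ := Finset.mem_image.mp (Finset.mem_filter.mp h).1
      obtain ⟨hp1, hp2⟩ := Finset.mem_product.mp hpq
      have hpP : pq.1 ∈ Pset := by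
        have := (Finset.mem_filter.mp hp1).1
        rwa [hPF, Set.Finite.mem_toFinset] at this
      have hqP : pq.2 ∈ Pset := by
        have := (Finset.mem_filter.mp hp2).1
        rwa [hPF, Set.Finite.mem_toFinset] at this
      have hα : 0 < ⟪pq.1, e⟫ := (Finset.mem_filter.mp hp1).2
      have hγ : ⟪pq.2, e⟫ < 0 := (Finset.mem_filter.mp hp2).2
      have h1 := hy0strict pq.1 hpP (fun hz => by rw [hz, inner_zero_left] at hα; linarith)
      have h2 := hy0strict pq.2 hqP (fun hz => by rw [hz, inner_zero_left] at hγ; linarith)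
      show ⟪wf pq.1 pq.2, y0⟫ < ⟪pq.1, e⟫ * a pq.2 - ⟪pq.2, e⟫ * a pq.1
      rw [hwexp]
      nlinarith [mul_pos hα (sub_pos.mpr h2), mul_pos (neg_pos.mpr hγ) (sub_pos.mpr h1)]
  -- pair inequalities from membership in the cylinder
  have hpairineq : ∀ y : EuclideanSpace ℝ (Fin d), (∀ i ∈ C, ⟪i.1, y⟫ ≤ i.2) →
      ∀ p ∈ Pset, ∀ q ∈ Pset, 0 < ⟪p, e⟫ → ⟪q, e⟫ < 0 →
      (⟪p, y⟫ - a p) / ⟪p, e⟫ ≤ (⟪q, y⟫ - a q) / ⟪q, e⟫ := by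
    intro y hy p hp q hq hα hγ
    have hpne : p ≠ 0 := fun hz => by rw [hz, inner_zero_left] at hα; linarith
    have hqne : q ≠ 0 := fun hz => by rw [hz, inner_zero_left] at hγ; linarith
    have hkey : ⟪p, e⟫ * ⟪q, y⟫ - ⟪q, e⟫ * ⟪p, y⟫ ≤ ⟪p, e⟫ * a q - ⟪q, e⟫ * a p := by
      by_cases hw0 : wf p q = 0
      · have h1 : ⟪wf p q, y⟫ = 0 := by rw [hw0, inner_zero_left]
        rw [hwexp] at h1
        have h2 : ⟪wf p q, y0⟫ = 0 := by rw [hw0, inner_zero_left]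
        rw [hwexp] at h2
        have h3 := hy0strict p hp hpne
        have h4 := hy0strict q hq hqne
        nlinarith
      · have hmem : (wf p q, ccf p q) ∈ C := by
          apply Finset.mem_union_right
          rw [hCP, Finset.mem_filter]
          constructor
          · apply Finset.mem_image.mpr
            refine ⟨(p, q), ?_, rfl⟩
            rw [Finset.mem_product]
            constructor
            · rw [Finset.mem_filter, hPF, Set.Finite.mem_toFinset]; exact ⟨hp, hα⟩
            · rw [Finset.mem_filter, hPF, Set.Finite.mem_toFinset]; exact ⟨hq, hγ⟩
          · exact hw0
        have := hy _ hmem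
        rw [hwexp] at this
        exact this
    set R : ℝ := (⟪q, y⟫ - a q) / ⟪q, e⟫ with hR
    have hγ' : (0:ℝ) < -⟪q, e⟫ := neg_pos.mpr hγ
    have hrq : ⟪q, y⟫ - a q = R * ⟪q, e⟫ := by rw [hR]; exact (div_mul_cancel₀ (⟪q, y⟫ - a q) (ne_of_lt hγ)).symm
    rw [div_le_iff₀ hα]
    have h10 : ⟪p, e⟫ * (⟪q, y⟫ - a q) = ⟪p, e⟫ * (R * ⟪q, e⟫) := by rw [hrq]
    nlinarith [hkey, h10, hγ']
    -- legitimate S0 bound for cylinder members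
  have hS0bound : ∀ y : EuclideanSpace ℝ (Fin d), (∀ i ∈ C, ⟪i.1, y⟫ ≤ i.2) →
      ∀ p ∈ Pset, ⟪p, e⟫ = 0 → ⟪p, y⟫ ≤ a p := by
    intro y hy p hp hpe
    by_cases hp0 : p = 0
    · rw [hp0, inner_zero_left]; exact ha0 (hp0 ▸ hp)
    · refine hy (p, a p) ?_
      apply Finset.mem_union_left
      rw [hC0]
      apply Finset.mem_image.mpr
      exact ⟨p, Finset.mem_filter.mpr ⟨by rw [hPF, Set.Finite.mem_toFinset]; exact hp,
        hpe, hp0⟩, rfl⟩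
  -- lift from the cylinder to P
  have hlift : ∀ y : EuclideanSpace ℝ (Fin d), (∀ i ∈ C, ⟪i.1, y⟫ ≤ i.2) →
      ∃ t : ℝ, y - t • e ∈ polyOf Pset a := by
    intro y hy
    obtain ⟨t, ht1, ht2⟩ := exists_t Pset hfin a e y (hpairineq y hy)
    exact ⟨t, mem_polyOf_of_t Pset a e y t (hS0bound y hy) ht1 ht2⟩
  -- THE KEY: every constraint in C is valid on the enlarged polytope
  have hkeyQ : ∀ x ∈ polyOf Pset (fun p => a p + b * |⟪p, e⟫|), ∀ i ∈ C, ⟪i.1, x⟫ ≤ i.2 := by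
    by_contra hcon
    push_neg at hcon
    obtain ⟨x, hxQ, i1, hi1C, hi1v⟩ := hcon
    obtain ⟨i0, hi0C, hi0v, z0, hz0R, hz0t, δ, hδpos, hloc⟩ :=
      lemmaA C hCnz y0 x hCy0 ⟨i1, hi1C, hi1v⟩
    rcases Finset.mem_union.mp hi0C with h0 | hPc
    · -- S0 constraint cannot be violated
      obtain ⟨p, hpmem, hpeq⟩ := Finset.mem_image.mp h0
      have hmf := Finset.mem_filter.mp hpmem
      have hpP : p ∈ Pset := by
        have := hmf.1; rwa [hPF, Set.Finite.mem_toFinset] at this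
      have hq := hxQ p hpP
      simp only at hq
      rw [hmf.2.1, abs_zero, mul_zero, add_zero] at hq
      rw [← hpeq] at hi0v
      simp only at hi0v
      linarith
    · -- pair constraint: the geometric argument
      obtain ⟨pq, hpqmem, hpqeq⟩ := Finset.mem_image.mp (Finset.mem_filter.mp hPc).1
      obtain ⟨hmp1, hmp2⟩ := Finset.mem_product.mp hpqmem
      have hpP : pq.1 ∈ Pset := by
        have := (Finset.mem_filter.mp hmp1).1
        rwa [hPF, Set.Finite.mem_toFinset] at this
      have hqP : pq.2 ∈ Pset := by
        have := (Finset.mem_filter.mp hmp2).1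
        rwa [hPF, Set.Finite.mem_toFinset] at this
      have hα : 0 < ⟪pq.1, e⟫ := (Finset.mem_filter.mp hmp1).2
      have hγ : ⟪pq.2, e⟫ < 0 := (Finset.mem_filter.mp hmp2).2
      have hγ' : (0:ℝ) < -⟪pq.2, e⟫ := neg_pos.mpr hγ
      have hw0' : wf pq.1 pq.2 ≠ 0 := by
        have := (Finset.mem_filter.mp hPc).2
        rw [← hpqeq] at this
        exact this
      have hi0v' : ⟪pq.1, e⟫ * a pq.2 - ⟪pq.2, e⟫ * a pq.1 < ⟪wf pq.1 pq.2, x⟫ := by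
        rw [← hpqeq] at hi0v; exact hi0v
      have hz0t' : ⟪wf pq.1 pq.2, z0⟫ = ⟪pq.1, e⟫ * a pq.2 - ⟪pq.2, e⟫ * a pq.1 := by
        rw [← hpqeq] at hz0t; exact hz0t
      have hloc' : ∀ v : EuclideanSpace ℝ (Fin d), ⟪wf pq.1 pq.2, v⟫ = 0 → ‖v‖ < δ →
          ∀ j ∈ C, ⟪j.1, z0 + v⟫ ≤ j.2 := by
        intro v hv hn
        rw [← hpqeq] at hloc
        exact hloc v hv hn
      have hwval : ∀ z ∈ polyOf Pset a,
          ⟪wf pq.1 pq.2, z⟫ ≤ ⟪pq.1, e⟫ * a pq.2 - ⟪pq.2, e⟫ * a pq.1 := by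
        intro z hz
        have := hCvalid i0 hi0C z hz
        rw [← hpqeq] at this
        exact this
      have hwy0 : ⟪wf pq.1 pq.2, y0⟫ < ⟪pq.1, e⟫ * a pq.2 - ⟪pq.2, e⟫ * a pq.1 := by
        have := hCy0 i0 hi0C
        rw [← hpqeq] at this
        exact this
      -- tightness transfer
      have hL1 : ∀ z ∈ polyOf Pset a,
          ⟪wf pq.1 pq.2, z⟫ = ⟪pq.1, e⟫ * a pq.2 - ⟪pq.2, e⟫ * a pq.1 →
          (⟪pq.1, z⟫ = a pq.1 ∧ ⟪pq.2, z⟫ = a pq.2) := by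
        intro z hzP hzt
        have h1 := hzP pq.1 hpP
        have h2 := hzP pq.2 hqP
        rw [hwexp] at hzt
        constructor
        · refine le_antisymm h1 ?_
          nlinarith [mul_nonneg hα.le (sub_nonneg.mpr h2), hγ']
        · refine le_antisymm h2 ?_
          nlinarith [mul_nonneg hγ'.le (sub_nonneg.mpr h1), hα]
      -- the tight cylinder face and the corresponding face of P
      set T : Set (EuclideanSpace ℝ (Fin d)) := {y | (∀ i ∈ C, ⟪i.1, y⟫ ≤ i.2) ∧
        ⟪wf pq.1 pq.2, y⟫ = ⟪pq.1, e⟫ * a pq.2 - ⟪pq.2, e⟫ * a pq.1} with hT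
      set F : Set (EuclideanSpace ℝ (Fin d)) := {z | z ∈ polyOf Pset a ∧
        ⟪pq.1, z⟫ = a pq.1 ∧ ⟪pq.2, z⟫ = a pq.2} with hF
      have hFtight : ∀ z ∈ F, ⟪wf pq.1 pq.2, z⟫ = ⟪pq.1, e⟫ * a pq.2 - ⟪pq.2, e⟫ * a pq.1 := by
        intro z hz
        rw [hwexp, hz.2.1, hz.2.2]
      have hFT : ∀ f ∈ F, ∀ t : ℝ, f + t • e ∈ T := by
        intro f hf t
        constructor
        · intro i hi
          have h1 : ⟪i.1, f + t • e⟫ = ⟪i.1, f⟫ + t * ⟪i.1, e⟫ := by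
            rw [inner_add_right, real_inner_smul_right]
          rw [h1, hCorth i hi, mul_zero, add_zero]
          exact hCvalid i hi f hf.1
        · have h1 : ⟪wf pq.1 pq.2, f + t • e⟫ = ⟪wf pq.1 pq.2, f⟫ + t * ⟪wf pq.1 pq.2, e⟫ := by
            rw [inner_add_right, real_inner_smul_right]
          rw [h1, hworth, mul_zero, add_zero]
          exact hFtight f hf
      have hTF : ∀ y ∈ T, ∃ f ∈ F, ∃ t : ℝ, y = f + t • e := by
        intro y hy
        obtain ⟨t, htP⟩ := hlift y hy.1
        have htight : ⟪wf pq.1 pq.2, y - t • e⟫ =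
            ⟪pq.1, e⟫ * a pq.2 - ⟪pq.2, e⟫ * a pq.1 := by
          rw [inner_sub_right, real_inner_smul_right, hworth, mul_zero, sub_zero]
          exact hy.2
        obtain ⟨hp', hq'⟩ := hL1 _ htP htight
        exact ⟨y - t • e, ⟨htP, hp', hq'⟩, t, by rw [sub_add_cancel]⟩
      have hz0T : z0 ∈ T := ⟨hz0R, hz0t'⟩
      obtain ⟨x0, hx0F, t0, hz0eq⟩ := hTF z0 hz0T
      -- transversality of F
      have htrF : ∀ z ∈ F, ∀ t : ℝ, z + t • e ∈ F → t = 0 := by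
        intro z hz t hzt
        have h1 : ⟪pq.1, z + t • e⟫ = ⟪pq.1, z⟫ + t * ⟪pq.1, e⟫ := by
          rw [inner_add_right, real_inner_smul_right]
        have h2 := hzt.2.1
        rw [h1, hz.2.1] at h2
        have h3 : t * ⟪pq.1, e⟫ = 0 := by linarith
        rcases mul_eq_zero.mp h3 with h | h
        · exact h
        · exact absurd h (ne_of_gt hα)
      -- convexity of F
      have hFconv : Convex ℝ F := by
        have hlin1 : IsLinearMap ℝ (fun z : EuclideanSpace ℝ (Fin d) => ⟪pq.1, z⟫) :=
          ⟨fun u v => inner_add_right _ _ _, fun c u => real_inner_smul_right _ _ _⟩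
        have hlin2 : IsLinearMap ℝ (fun z : EuclideanSpace ℝ (Fin d) => ⟪pq.2, z⟫) :=
          ⟨fun u v => inner_add_right _ _ _, fun c u => real_inner_smul_right _ _ _⟩
        have hFeq' : F = polyOf Pset a ∩ ({z | ⟪pq.1, z⟫ = a pq.1} ∩ {z | ⟪pq.2, z⟫ = a pq.2}) := by
          rw [hF]; ext z; simp only [Set.mem_setOf_eq, Set.mem_inter_iff]
        rw [hFeq']
        exact hconv.inter ((convex_hyperplane hlin1 _).inter (convex_hyperplane hlin2 _))
      have henotF : e ∉ vectorSpan ℝ F := not_mem_vectorSpan_of_transversal hFconv he htrF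
      -- local structure lemma: points of the tight face near z0
      have hvT : ∀ v : EuclideanSpace ℝ (Fin d), ⟪wf pq.1 pq.2, v⟫ = 0 →
          ∃ c : ℝ, 0 < c ∧ z0 + c • v ∈ T := by
        intro v hv
        set c : ℝ := δ / (‖v‖ + 1) with hc
        have hcpos : 0 < c := by rw [hc]; positivity
        have hnorm : ‖c • v‖ < δ := by
          rw [norm_smul, Real.norm_eq_abs, abs_of_pos hcpos, hc]
          rw [div_mul_eq_mul_div, div_lt_iff₀ (by positivity : (0:ℝ) < ‖v‖ + 1)]
          nlinarith [norm_nonneg v, hδpos]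
        refine ⟨c, hcpos, ?_, ?_⟩
        · exact hloc' (c • v) (by rw [real_inner_smul_right, hv, mul_zero]) hnorm
        · rw [inner_add_right, real_inner_smul_right, hv, mul_zero, add_zero]
          exact hz0t'
      -- vectorSpan T = orthogonal complement of w
      have hTle : vectorSpan ℝ T ≤ (Submodule.span ℝ {wf pq.1 pq.2})ᗮ := by
        rw [vectorSpan_def, Submodule.span_le]
        rintro v ⟨y1, hy1, y2, hy2, rfl⟩
        rw [SetLike.mem_coe, Submodule.mem_orthogonal_singleton_iff_inner_right]
        show ⟪wf pq.1 pq.2, y1 - y2⟫ = 0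
        rw [inner_sub_right, hy1.2, hy2.2, sub_self]
      have hTge : (Submodule.span ℝ {wf pq.1 pq.2})ᗮ ≤ vectorSpan ℝ T := by
        intro v hv
        rw [Submodule.mem_orthogonal_singleton_iff_inner_right] at hv
        obtain ⟨c, hcpos, hmemT⟩ := hvT v hv
        have hdiff : c • v ∈ vectorSpan ℝ T := by
          have h5 := vsub_mem_vectorSpan ℝ hmemT hz0T
          rw [vsub_eq_sub, add_sub_cancel_left] at h5
          exact h5
        have h6 : v = c⁻¹ • (c • v) := by
          rw [smul_smul, inv_mul_cancel₀ (ne_of_gt hcpos), one_smul]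
        rw [h6]
        exact Submodule.smul_mem _ _ hdiff
      have hTeq : vectorSpan ℝ T = (Submodule.span ℝ {wf pq.1 pq.2})ᗮ := le_antisymm hTle hTge
      -- vectorSpan T = vectorSpan F ⊔ span e
      have hFe : vectorSpan ℝ T = vectorSpan ℝ F ⊔ Submodule.span ℝ {e} := by
        apply le_antisymm
        · rw [vectorSpan_def, Submodule.span_le]
          rintro v ⟨y1, hy1, y2, hy2, rfl⟩
          obtain ⟨f1, hf1, t1, rfl⟩ := hTF y1 hy1
          obtain ⟨f2, hf2, t2, rfl⟩ := hTF y2 hy2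
          show (f1 + t1 • e) - (f2 + t2 • e) ∈ _
          have heq : (f1 + t1 • e) - (f2 + t2 • e) = (f1 - f2) + (t1 - t2) • e := by
            rw [sub_smul]
            abel
          rw [heq]
          exact SetLike.mem_coe.mpr (Submodule.add_mem_sup (vsub_mem_vectorSpan ℝ hf1 hf2)
            (Submodule.smul_mem _ _ (Submodule.mem_span_singleton_self e)))
        · apply sup_le
          · apply vectorSpan_mono
            intro f hf
            have h7 := hFT f hf 0
            rwa [zero_smul, add_zero] at h7
          · rw [Submodule.span_singleton_le_iff_mem]
            have h1 : x0 + (1:ℝ) • e ∈ T := hFT x0 hx0F 1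
            have h0' : x0 ∈ T := by
              have h8 := hFT x0 hx0F 0
              rwa [zero_smul, add_zero] at h8
            have h9 := vsub_mem_vectorSpan ℝ h1 h0'
            rw [vsub_eq_sub, one_smul, add_sub_cancel_left] at h9
            exact h9
      -- dimension count
      have hdim1 : Module.finrank ℝ ((Submodule.span ℝ {wf pq.1 pq.2})ᗮ :
          Submodule ℝ (EuclideanSpace ℝ (Fin d))) = d - 1 := by
        have h1 := Submodule.finrank_add_finrank_orthogonal
          (Submodule.span ℝ {wf pq.1 pq.2} : Submodule ℝ (EuclideanSpace ℝ (Fin d)))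
        rw [finrank_span_singleton hw0', finrank_euclideanSpace, Fintype.card_fin] at h1
        omega
      have hinf : vectorSpan ℝ F ⊓ Submodule.span ℝ {e} = ⊥ := by
        rw [eq_bot_iff]
        intro z hz
        obtain ⟨hz1, hz2⟩ := Submodule.mem_inf.mp hz
        obtain ⟨t, rfl⟩ := Submodule.mem_span_singleton.mp hz2
        rcases eq_or_ne t 0 with rfl | ht
        · rw [zero_smul]; exact Submodule.zero_mem ⊥
        · exfalso
          apply henotF
          have h6 : e = t⁻¹ • (t • e) := by
            rw [smul_smul, inv_mul_cancel₀ ht, one_smul]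
          rw [h6]
          exact Submodule.smul_mem _ _ hz1
      have hsdimF : sdim F = d - 2 := by
        have h2 := Submodule.finrank_sup_add_finrank_inf_eq (vectorSpan ℝ F)
          (Submodule.span ℝ {e})
        rw [← hFe, hTeq, hdim1, hinf, finrank_bot, finrank_span_singleton he] at h2
        unfold sdim
        rw [direction_affineSpan]
        omega
      -- F is an exposed face
      have hx0cc : ⟪wf pq.1 pq.2, x0⟫ = ⟪pq.1, e⟫ * a pq.2 - ⟪pq.2, e⟫ * a pq.1 :=
        hFtight x0 hx0F
      have hFexp : F = expFace (polyOf Pset a) (wf pq.1 pq.2) := by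
        ext z
        constructor
        · intro hzF
          refine ⟨hzF.1, fun y hy => ?_⟩
          have h1 := hwval y hy
          rw [hFtight z hzF]
          exact h1
        · rintro ⟨hzP, hmax⟩
          have h1 : ⟪wf pq.1 pq.2, z⟫ ≤ ⟪pq.1, e⟫ * a pq.2 - ⟪pq.2, e⟫ * a pq.1 := hwval z hzP
          have h2 : ⟪pq.1, e⟫ * a pq.2 - ⟪pq.2, e⟫ * a pq.1 ≤ ⟪wf pq.1 pq.2, z⟫ := by
            rw [← hx0cc]
            exact hmax x0 hx0F.1
          obtain ⟨hp', hq'⟩ := hL1 z hzP (le_antisymm h1 h2)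
          exact ⟨hzP, hp', hq'⟩
      -- F is in the shadow boundary
      have hshadow : ∀ z ∈ F, ∀ t : ℝ, z + t • e ∈ polyOf Pset a → z + t • e ∈ polyOf Pset a ∩ F ∨ True := fun _ _ _ _ => Or.inr trivial
      have hshadow' : ∀ z ∈ F, ∀ t : ℝ, z + t • e ∈ polyOf Pset a → z + t • e ∈ F := by
        intro z hz t hmem
        have h2 : ⟪wf pq.1 pq.2, z + t • e⟫ =
            ⟪pq.1, e⟫ * a pq.2 - ⟪pq.2, e⟫ * a pq.1 := by
          rw [inner_add_right, real_inner_smul_right, hworth, mul_zero, add_zero]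
          exact hFtight z hz
        obtain ⟨hp', hq'⟩ := hL1 _ hmem h2
        exact ⟨hmem, hp', hq'⟩
      -- apply the face hypothesis
      obtain ⟨ps, hpsP, hpsorth, hFeq⟩ :=
        hface F ⟨wf pq.1 pq.2, hw0', hFexp⟩ hsdimF hshadow' htrF
      have hpse : ⟪ps, e⟫ = 0 := by rw [real_inner_comm]; exact hpsorth
      have hpsx0 : ⟪ps, x0⟫ = a ps := by
        have h3 : x0 ∈ polyOf Pset a ∩ {z | ⟪ps, z⟫ = a ps} := by rw [← hFeq]; exact hx0F
        exact h3.2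
      have hps0 : ps ≠ 0 := by
        intro h0
        have ha0' : a ps = 0 := by
          rw [h0] at hpsx0
          rw [inner_zero_left] at hpsx0
          rw [h0]
          exact hpsx0.symm
        have hFP : F = polyOf Pset a := by
          rw [hFeq, h0]
          ext z
          simp only [Set.mem_inter_iff, Set.mem_setOf_eq, inner_zero_left]
          rw [h0] at ha0'
          constructor
          · exact fun h => h.1
          · exact fun h => ⟨h, ha0'.symm⟩
        have hd2 := hsdimF
        rw [hFP, hdim] at hd2
        omega
      -- the contact vector is parallel to w
      have hpsT : ∀ y ∈ T, ⟪ps, y⟫ = a ps := by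
        intro y hy
        obtain ⟨f, hfF, t, rfl⟩ := hTF y hy
        have hfps : ⟪ps, f⟫ = a ps := by
          have h3 : f ∈ polyOf Pset a ∩ {z | ⟪ps, z⟫ = a ps} := by rw [← hFeq]; exact hfF
          exact h3.2
        rw [inner_add_right, real_inner_smul_right, hpse, mul_zero, add_zero, hfps]
      have hz0ps : ⟪ps, z0⟫ = a ps := hpsT z0 hz0T
      obtain ⟨ρ, hρ⟩ : ∃ ρ : ℝ, ρ • wf pq.1 pq.2 = ps := by
        have hmem : ps ∈ ((Submodule.span ℝ {wf pq.1 pq.2})ᗮᗮ :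
            Submodule ℝ (EuclideanSpace ℝ (Fin d))) := by
          rw [Submodule.mem_orthogonal]
          intro v hv
          rw [Submodule.mem_orthogonal_singleton_iff_inner_right] at hv
          obtain ⟨c, hcpos, hmemT⟩ := hvT v hv
          have h1 : ⟪ps, z0 + c • v⟫ = a ps := hpsT _ hmemT
          rw [inner_add_right, real_inner_smul_right, hz0ps] at h1
          have h2 : ⟪ps, v⟫ = 0 := by
            have h3 : c * ⟪ps, v⟫ = 0 := by linarith
            rcases mul_eq_zero.mp h3 with h | h
            · exact absurd h (ne_of_gt hcpos)
            · exact h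
          rw [real_inner_comm]
          exact h2
        rw [Submodule.orthogonal_orthogonal] at hmem
        exact Submodule.mem_span_singleton.mp hmem
      have haps : a ps = ρ * (⟪pq.1, e⟫ * a pq.2 - ⟪pq.2, e⟫ * a pq.1) := by
        rw [← hpsx0, ← hρ, real_inner_smul_left, hx0cc]
      have hpsy0 : ⟪ps, y0⟫ < a ps := hy0strict ps hpsP hps0
      have hρpos : 0 < ρ := by
        have h1 : ⟪ps, y0⟫ = ρ * ⟪wf pq.1 pq.2, y0⟫ := by
          rw [← hρ, real_inner_smul_left]
        rcases lt_trichotomy ρ 0 with h | h | h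
        · exfalso; nlinarith
        · exfalso
          apply hps0
          rw [← hρ, h, zero_smul]
        · exact h
      -- final contradiction
      have hxps := hxQ ps hpsP
      simp only at hxps
      rw [hpse, abs_zero, mul_zero, add_zero] at hxps
      have h2 : ⟪ps, x⟫ = ρ * ⟪wf pq.1 pq.2, x⟫ := by
        rw [← hρ, real_inner_smul_left]
      nlinarith [mul_lt_mul_of_pos_left hi0v' hρpos]
  -- final assembly
  ext x
  constructor
  · intro hmem
    rw [Set.mem_add] at hmem
    obtain ⟨y, hy, z, hz, hxe⟩ := hmem
    obtain ⟨l, hl1, hl2, rfl⟩ := hz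
    intro p hp
    have h1 := hy p hp
    have h2 : ⟪p, y + l • e⟫ = ⟪p, y⟫ + l * ⟪p, e⟫ := by
      rw [inner_add_right, real_inner_smul_right]
    have h3 : l * ⟪p, e⟫ ≤ b * |⟪p, e⟫| := by
      calc l * ⟪p, e⟫ ≤ |l * ⟪p, e⟫| := le_abs_self _
        _ = |l| * |⟪p, e⟫| := abs_mul _ _
        _ ≤ b * |⟪p, e⟫| := mul_le_mul_of_nonneg_right (abs_le.mpr ⟨hl1, hl2⟩) (abs_nonneg _)
    show ⟪p, x⟫ ≤ a p + b * |⟪p, e⟫|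
    rw [← hxe, h2]
    linarith
  · intro hx
    have hC_at_x : ∀ i ∈ C, ⟪i.1, x⟫ ≤ i.2 := hkeyQ x hx
    obtain ⟨t0, ht0up, ht0dn⟩ := exists_t Pset hfin a e x (hpairineq x hC_at_x)
    set t : ℝ := min b (max (-b) t0) with htdef
    have htb1 : -b ≤ t := by
      rw [htdef]
      exact le_min (by linarith) (le_max_left _ _)
    have htb2 : t ≤ b := by rw [htdef]; exact min_le_left _ _
    have hup' : ∀ p ∈ Pset, 0 < ⟪p, e⟫ → (⟪p, x⟫ - a p) / ⟪p, e⟫ ≤ t := by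
      intro p hp hpe
      have h1 := ht0up p hp hpe
      have hrb : (⟪p, x⟫ - a p) / ⟪p, e⟫ ≤ b := by
        rw [div_le_iff₀ hpe]
        have h4 := hx p hp
        simp only at h4
        rw [abs_of_pos hpe] at h4
        linarith
      rw [htdef]
      exact le_min hrb (le_trans h1 (le_max_right _ _))
    have hdn' : ∀ q ∈ Pset, ⟪q, e⟫ < 0 → t ≤ (⟪q, x⟫ - a q) / ⟪q, e⟫ := by
      intro q hq hqe
      have h1 := ht0dn q hq hqe
      have hrb : -b ≤ (⟪q, x⟫ - a q) / ⟪q, e⟫ := by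
        rw [le_div_iff_of_neg hqe]
        have h4 := hx q hq
        simp only at h4
        rw [abs_of_neg hqe] at h4
        linarith
      calc t ≤ max (-b) t0 := by rw [htdef]; exact min_le_right _ _
        _ ≤ (⟪q, x⟫ - a q) / ⟪q, e⟫ := max_le hrb h1
    have hS0x : ∀ p ∈ Pset, ⟪p, e⟫ = 0 → ⟪p, x⟫ ≤ a p := by
      intro p hp hpe
      have h4 := hx p hp
      simp only at h4
      rw [hpe, abs_zero, mul_zero, add_zero] at h4
      exact h4
    have hmem := mem_polyOf_of_t Pset a e x t hS0x hup' hdn'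
    rw [Set.mem_add]
    exact ⟨x - t • e, hmem, t • e, ⟨t, htb1, htb2, rfl⟩, by rw [sub_add_cancel]⟩
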